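/- arXiv:math/0210284 — 2 statements merged into one kernel-verified Lean document; each statement's English description precedes it below -/
import Mathlib

section
/- For each neat equivalence class N of cyclic pairs in B ⊙ B, the k-linear map ψ_N: DA → A defined on the dual basis by ψ_N(γ*) = Σ_{(γ,δ) ∈ N} δ is a morphism of A–A-bimodules. -/
/-!  Basic combinatorics of a quiver given by source/target maps `s t : A → V`.
A path of positive length is a list of arrows `[a₁, …, aₙ]` written in order of
traversal (so the written path `aₙ … a₁` of the paper corresponds to the list
`[a₁, …, aₙ]`).  -/

namespace Monomial

variable {V A : Type*}

/-- `l` is a path: consecutive arrows are composable. -/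
def IsPath (s t : A → V) (l : List A) : Prop := l.Chain' fun a b => t a = s b

/-- Source of a (nonempty) path. -/
def srcOf (s : A → V) (l : List A) : Option V := l.head?.map s

/-- Target of a (nonempty) path. -/
def tgtOf (t : A → V) (l : List A) : Option V := l.getLast?.map t

/-- `l` is a nontrivial cycle. -/
def IsCycleList (s t : A → V) (l : List A) : Prop :=
  l ≠ [] ∧ IsPath s t l ∧ tgtOf t l = srcOf s l

/-- `Z` is a minimal set of path relations of length at least two. -/
def MinimalRels (s t : A → V) (Z : Set (List A)) : Prop :=
  ∀ z ∈ Z, IsPath s t z ∧ 2 ≤ z.length ∧ ∀ w ∈ Z, w <:+: z → w = z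

/-- `l` belongs to `B`: it is a path containing no subpath from `Z`
(the basis of the monomial algebra, positive length part). -/
def InB (s t : A → V) (Z : Set (List A)) (l : List A) : Prop :=
  IsPath s t l ∧ ∀ z ∈ Z, ¬ z <:+: l

/-- `(a, β)` is a cyclic pair in `Q₁ ⊙ B` (if `β = []` it stands for the
trivial path at `s a = t a`). -/
def PairOK (s t : A → V) (Z : Set (List A)) (p : A × List A) : Prop :=
  InB s t Z p.2 ∧ IsCycleList s t (p.2 ++ [p.1])

/-- The set `W` of cycles containing precisely one subpath from `Z`,
located at their end (for a written cycle `γ = ξα`, the list is `α ++ ξ`). -/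
def InW (s t : A → V) (Z : Set (List A)) (l : List A) : Prop :=
  IsCycleList s t l ∧
    ∃ ξ ∈ Z, (∃ α, l = α ++ ξ) ∧ ∀ z ∈ Z, ∀ p q, l = p ++ z ++ q → z = ξ ∧ q = []

/-- Two cycles are in the same circuit iff they are related by rotation. -/
def RotEquiv (l₁ l₂ : List A) : Prop := ∃ n, l₁.rotate n = l₂

end Monomial

namespace Monomial

open Classical

variable {V A : Type*}

/-- The basis of the finite-dimensional monomial algebra `A = kQ/⟨Z⟩`:
a basis element is either a vertex (trivial path) or a nonzero path. -/
def PB (s t : A → V) (Z : Set (List A)) : Type _ :=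
  V ⊕ {l : List A // l ≠ [] ∧ InB s t Z l}

/-- Source vertex of a basis element. -/
def srcP (s t : A → V) (Z : Set (List A)) : PB s t Z → V
  | .inl u => u
  | .inr l => s (l.1.head l.2.1)

/-- Target vertex of a basis element. -/
def tgtP (s t : A → V) (Z : Set (List A)) : PB s t Z → V
  | .inl u => u
  | .inr l => t (l.1.getLast l.2.1)

/-- Underlying list of arrows of a basis element. -/
def toListP (s t : A → V) (Z : Set (List A)) : PB s t Z → List A
  | .inl _ => []
  | .inr l => l.1

/-- The product `p·q` of two basis elements of the monomial algebra (`q` is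
applied first); `none` means the product is zero in `A`. -/
noncomputable def comp (s t : A → V) (Z : Set (List A)) :
    PB s t Z → PB s t Z → Option (PB s t Z)
  | .inl u, .inl v => if u = v then some (.inl u) else none
  | .inl u, .inr l => if t (l.1.getLast l.2.1) = u then some (.inr l) else none
  | .inr l, .inl v => if s (l.1.head l.2.1) = v then some (.inr l) else none
  | .inr l, .inr m =>
      if h : InB s t Z (m.1 ++ l.1) then
        some (.inr ⟨m.1 ++ l.1, fun hc => m.2.1 (List.append_eq_nil_iff.mp hc).1, h⟩)
      else none

variable (s t : A → V) (Z : Set (List A)) (k : Type*) [Field k]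

/-- Both `A` and its dual bimodule `DA` are modelled on the space of
`k`-valued functions on the basis `PB s t Z` (for `DA`, the coordinates are
taken in the dual basis `B*`). -/
abbrev MSp := PB s t Z → k

/-- The basis element `γ` of `A`, and at the same time the dual basis element
`γ*` of `DA`. -/
noncomputable def db (γ : PB s t Z) : MSp s t Z k := fun x => if x = γ then 1 else 0

variable [Fintype (PB s t Z)]

/-- Generic linear map on `MSp` determined by a relation: `f ↦ (x ↦ Σ_{R x γ} f γ)`. -/
noncomputable def sumByRel (R : PB s t Z → PB s t Z → Prop) :
    MSp s t Z k →ₗ[k] MSp s t Z k where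
  toFun f x := ∑ γ, if R x γ then f γ else 0
  map_add' f g := by
    funext x
    simp only [Pi.add_apply]
    rw [← Finset.sum_add_distrib]
    exact Finset.sum_congr rfl fun γ _ => by split <;> simp
  map_smul' c f := by
    funext x
    simp only [Pi.smul_apply, smul_eq_mul, RingHom.id_apply]
    rw [Finset.mul_sum]
    exact Finset.sum_congr rfl fun γ _ => by split <;> simp

/-- The two-sided bimodule action `p·f·q` on `DA`: `(p·f·q)(x) = f(q·x·p)`. -/
noncomputable def actLR (p q : PB s t Z) : MSp s t Z k →ₗ[k] MSp s t Z k :=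
  sumByRel s t Z k fun x γ =>
    ((comp s t Z x p).bind fun y => comp s t Z q y) = some γ

/-- The left action `f ↦ p·f` on `DA`: `(p·f)(x) = f(x·p)`. -/
noncomputable def actLin (p : PB s t Z) : MSp s t Z k →ₗ[k] MSp s t Z k :=
  sumByRel s t Z k fun x γ => comp s t Z x p = some γ

/-- The right action `f ↦ f·p` on `DA`: `(f·p)(x) = f(p·x)`. -/
noncomputable def actRlin (p : PB s t Z) : MSp s t Z k →ₗ[k] MSp s t Z k :=
  sumByRel s t Z k fun x γ => comp s t Z p x = some γ

/-- Left multiplication `y ↦ p·y` on `A`. -/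
noncomputable def mulLin (p : PB s t Z) : MSp s t Z k →ₗ[k] MSp s t Z k :=
  sumByRel s t Z k fun r q => comp s t Z p q = some r

/-- Right multiplication `y ↦ y·p` on `A`. -/
noncomputable def mulRlin (p : PB s t Z) : MSp s t Z k →ₗ[k] MSp s t Z k :=
  sumByRel s t Z k fun r q => comp s t Z q p = some r

variable {s t Z}

/-- `(α, β)` is a cyclic pair: `t(β) = s(α)` and `t(α) = s(β)`. -/
def IsCyclicPairPB (α β : PB s t Z) : Prop :=
  tgtP s t Z β = srcP s t Z α ∧ tgtP s t Z α = srcP s t Z β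

/-- A cyclic pair `(α, β) ∈ B ⊙ B` is neat if any arrow extending `β` inside
`B` is the corresponding extremal arrow of `α`, and vice versa. -/
def IsNeatPB (α β : PB s t Z) : Prop :=
  (∀ a : A, t a = srcP s t Z β ∧ InB s t Z (a :: toListP s t Z β) →
    (toListP s t Z α).getLast? = some a) ∧
  (∀ a : A, s a = tgtP s t Z β ∧ InB s t Z (toListP s t Z β ++ [a]) →
    (toListP s t Z α).head? = some a) ∧
  (∀ b : A, t b = srcP s t Z α ∧ InB s t Z (b :: toListP s t Z α) →
    (toListP s t Z β).getLast? = some b) ∧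
  (∀ b : A, s b = tgtP s t Z α ∧ InB s t Z (toListP s t Z α ++ [b]) →
    (toListP s t Z β).head? = some b)

/-- The elementary relation on cyclic pairs in `B ⊙ B`:
`(aα, β) ∼ (α, βa)` and `(αb, β) ∼ (α, bβ)`. -/
def ElemRelPB (p q : PB s t Z × PB s t Z) : Prop :=
  IsCyclicPairPB p.1 p.2 ∧ IsCyclicPairPB q.1 q.2 ∧
    ((∃ a : A, toListP s t Z p.1 = toListP s t Z q.1 ++ [a] ∧
        toListP s t Z q.2 = a :: toListP s t Z p.2) ∨
     (∃ b : A, toListP s t Z p.1 = b :: toListP s t Z q.1 ∧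
        toListP s t Z q.2 = toListP s t Z p.2 ++ [b]))

/-- `N` is a neat equivalence class: an equivalence class of cyclic pairs under
the relation generated by the elementary relations, all of whose members are
neat cyclic pairs. -/
def NeatClass (N : Set (PB s t Z × PB s t Z)) : Prop :=
  ∃ p : PB s t Z × PB s t Z, IsCyclicPairPB p.1 p.2 ∧
    N = {q | Relation.EqvGen ElemRelPB p q} ∧
    ∀ q ∈ N, IsNeatPB q.1 q.2

variable (s t Z)

/-- `ψ_N(γ*) = Σ_{(γ,δ) ∈ N} δ`, the value of `ψ_N` on a dual basis vector. -/
noncomputable def psiTarget (N : Set (PB s t Z × PB s t Z)) (γ : PB s t Z) :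
    MSp s t Z k :=
  fun δ => if (γ, δ) ∈ N then 1 else 0

/-- The linear map `ψ_N : DA → A`. -/
noncomputable def psiLin (N : Set (PB s t Z × PB s t Z)) :
    MSp s t Z k →ₗ[k] MSp s t Z k :=
  sumByRel s t Z k fun δ γ => (γ, δ) ∈ N

/-- `φ : DA → A` is a morphism of `A–A`-bimodules. -/
def IsBimodMap (φ : MSp s t Z k →ₗ[k] MSp s t Z k) : Prop :=
  ∀ p : PB s t Z,
    φ ∘ₗ actLin s t Z k p = mulLin s t Z k p ∘ₗ φ ∧
    φ ∘ₗ actRlin s t Z k p = mulRlin s t Z k p ∘ₗ φ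

/-- The space `Hom_{A-A}(DA, A)` of bimodule morphisms. -/
noncomputable def BimodHoms :
    Submodule k (MSp s t Z k →ₗ[k] MSp s t Z k) where
  carrier := {φ | IsBimodMap s t Z k φ}
  zero_mem' := by
    intro p
    constructor <;> simp [LinearMap.zero_comp, LinearMap.comp_zero]
  add_mem' := by
    intro a b ha hb p
    exact ⟨by rw [LinearMap.add_comp, LinearMap.comp_add, (ha p).1, (hb p).1],
      by rw [LinearMap.add_comp, LinearMap.comp_add, (ha p).2, (hb p).2]⟩
  smul_mem' := by
    intro c x hx p
    exact ⟨by rw [LinearMap.smul_comp, LinearMap.comp_smul, (hx p).1],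
      by rw [LinearMap.smul_comp, LinearMap.comp_smul, (hx p).2]⟩

/-- The space `Alt(DA) = {φ ∈ Hom_{A-A}(DA, A) : φ + φ* = 0}`, where `φ*` is
the transpose of `φ` (in the bases `B*` and `B`): the condition `φ + φ* = 0`
reads `φ(γ*)_δ + φ(δ*)_γ = 0` for all `γ, δ ∈ B`. -/
noncomputable def AltHoms :
    Submodule k (MSp s t Z k →ₗ[k] MSp s t Z k) where
  carrier := {φ | IsBimodMap s t Z k φ ∧
    ∀ γ δ : PB s t Z, φ (db s t Z k γ) δ + φ (db s t Z k δ) γ = 0}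
  zero_mem' := by
    refine ⟨fun p => ?_, fun γ δ => by simp⟩
    constructor <;> simp [LinearMap.zero_comp, LinearMap.comp_zero]
  add_mem' := by
    intro a b ha hb
    refine ⟨fun p => ⟨?_, ?_⟩, fun γ δ => ?_⟩
    · rw [LinearMap.add_comp, LinearMap.comp_add, (ha.1 p).1, (hb.1 p).1]
    · rw [LinearMap.add_comp, LinearMap.comp_add, (ha.1 p).2, (hb.1 p).2]
    · have h1 := ha.2 γ δ
      have h2 := hb.2 γ δ
      simp only [LinearMap.add_apply, Pi.add_apply]
      linear_combination h1 + h2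
  smul_mem' := by
    intro c x hx
    refine ⟨fun p => ⟨?_, ?_⟩, fun γ δ => ?_⟩
    · rw [LinearMap.smul_comp, LinearMap.comp_smul, (hx.1 p).1]
    · rw [LinearMap.smul_comp, LinearMap.comp_smul, (hx.1 p).2]
    · have h := hx.2 γ δ
      simp only [LinearMap.smul_apply, Pi.smul_apply, smul_eq_mul]
      linear_combination c * h

end Monomial

namespace Monomial

variable {V A : Type*} {s t : A → V} {Z : Set (List A)}

lemma toListP_ne_nil_inr (l : {l : List A // l ≠ [] ∧ InB s t Z l}) :
    toListP s t Z (.inr l) ≠ [] := l.2.1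


@[simp] lemma toListP_inl (u : V) : toListP s t Z (Sum.inl u) = [] := rfl
@[simp] lemma toListP_inr (l : {l : List A // l ≠ [] ∧ InB s t Z l}) :
    toListP s t Z (Sum.inr l) = l.1 := rfl
@[simp] lemma srcP_inl (u : V) : srcP s t Z (Sum.inl u) = u := rfl
@[simp] lemma tgtP_inl (u : V) : tgtP s t Z (Sum.inl u) = u := rfl

lemma InB_toListP (hZ : MinimalRels s t Z) (x : PB s t Z) : InB s t Z (toListP s t Z x) := by
  cases x with
  | inl u =>
      refine ⟨List.isChain_nil, fun z hz hi => ?_⟩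
      have hlen := (hZ z hz).2.1
      have : z = [] := List.infix_nil.mp hi
      simp [this] at hlen
  | inr l => exact l.2.2

lemma InB_infix {l l' : List A} (h : InB s t Z l) (hi : l' <:+: l) : InB s t Z l' :=
  ⟨h.1.infix hi, fun z hz hzl => h.2 z hz (hzl.trans hi)⟩

lemma srcP_eq_of_head? {x : PB s t Z} {a : A} (h : (toListP s t Z x).head? = some a) :
    srcP s t Z x = s a := by
  cases x with
  | inl u => simp [toListP] at h
  | inr l =>
      have := List.head?_eq_head (l := l.1) l.2.1
      rw [toListP] at h
      rw [this] at h
      simp [srcP]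
      rw [Option.some_inj.mp h]

lemma tgtP_eq_of_getLast? {x : PB s t Z} {a : A} (h : (toListP s t Z x).getLast? = some a) :
    tgtP s t Z x = t a := by
  cases x with
  | inl u => simp [toListP] at h
  | inr l =>
      have := List.getLast?_eq_getLast (l := l.1) l.2.1
      rw [toListP] at h
      rw [this] at h
      simp [tgtP]
      rw [Option.some_inj.mp h]

lemma eq_inl_of_toListP_nil {x : PB s t Z} (h : toListP s t Z x = []) :
    x = .inl (srcP s t Z x) ∧ tgtP s t Z x = srcP s t Z x := by
  cases x with
  | inl u => exact ⟨rfl, rfl⟩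
  | inr l => exact absurd h l.2.1

lemma PB_ext {x y : PB s t Z} (hl : toListP s t Z x = toListP s t Z y)
    (hs : srcP s t Z x = srcP s t Z y) : x = y := by
  cases x with
  | inl u =>
      cases y with
      | inl v => simp only [srcP] at hs; rw [hs]
      | inr m => exact absurd hl.symm m.2.1
  | inr l =>
      cases y with
      | inl v => exact absurd hl l.2.1
      | inr m => exact congrArg Sum.inr (Subtype.ext hl)

/-- junction of a chain -/
lemma chain'_junction {l₁ l₂ : List A} (h : IsPath s t (l₁ ++ l₂)) {a b : A}
    (h₁ : l₁.getLast? = some a) (h₂ : l₂.head? = some b) : t a = s b := by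
  unfold IsPath List.Chain' at h
  rw [List.isChain_append] at h
  exact h.2.2 a h₁ b h₂

end Monomial

namespace Monomial

variable {V A : Type*} {s t : A → V} {Z : Set (List A)}

lemma comp_some_facts {x y r : PB s t Z} (h : comp s t Z x y = some r) :
    toListP s t Z r = toListP s t Z y ++ toListP s t Z x ∧
      tgtP s t Z y = srcP s t Z x ∧ srcP s t Z r = srcP s t Z y ∧
        tgtP s t Z r = tgtP s t Z x := by
  cases x with
  | inl u =>
    cases y with
    | inl v =>
        rw [comp] at h
        split_ifs at h with huv
        injection h with h
        subst h
        exact ⟨rfl, huv.symm, huv, rfl⟩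
    | inr m =>
        rw [comp] at h
        split_ifs at h with hm
        injection h with h
        subst h
        refine ⟨by simp [toListP], hm, rfl, hm⟩
  | inr l =>
    cases y with
    | inl v =>
        rw [comp] at h
        split_ifs at h with hl
        injection h with h
        subst h
        exact ⟨rfl, hl.symm, hl, rfl⟩
    | inr m =>
        rw [comp] at h
        split_ifs at h with hB
        injection h with h
        subst h
        refine ⟨rfl, ?_, ?_, ?_⟩
        · exact chain'_junction hB.1 (List.getLast?_eq_getLast m.2.1)
            (List.head?_eq_head l.2.1)
        · show s ((m.1 ++ l.1).head _) = s (m.1.head _)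
          rw [List.head_append_of_ne_nil m.2.1]
        · show t ((m.1 ++ l.1).getLast _) = t (l.1.getLast _)
          rw [List.getLast_append_of_ne_nil (l := m.1) _ l.2.1]

lemma comp_eq_some_of {x y r : PB s t Z}
    (hl : toListP s t Z r = toListP s t Z y ++ toListP s t Z x)
    (hc : tgtP s t Z y = srcP s t Z x) (hs : srcP s t Z r = srcP s t Z y)
    (ht : tgtP s t Z r = tgtP s t Z x) : comp s t Z x y = some r := by
  cases x with
  | inl u =>
    cases y with
    | inl v =>
        have huv : u = v := hc.symm
        rw [comp, if_pos huv]
        have h0 : toListP s t Z r = [] := by simpa using hl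
        obtain ⟨hr, -⟩ := eq_inl_of_toListP_nil h0
        have h2 : srcP s t Z r = u := hs.trans huv.symm
        rw [hr, h2]
    | inr m =>
        rw [comp]
        split_ifs with h
        · congr 1
          refine PB_ext (x := (.inr m : PB s t Z)) ?_ hs.symm
          simpa using hl.symm
        · exact absurd hc h
  | inr l =>
    cases y with
    | inl v =>
        rw [comp]
        split_ifs with h
        · congr 1
          refine PB_ext (x := (.inr l : PB s t Z)) ?_ (hc.symm.trans hs.symm)
          simpa using hl.symm
        · exact absurd hc.symm h
    | inr m =>
        have hne : m.1 ++ l.1 ≠ [] := fun hcon => m.2.1 (List.append_eq_nil_iff.mp hcon).1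
        have hrl : toListP s t Z r = m.1 ++ l.1 := hl
        have hr : ∃ hr', r = .inr ⟨m.1 ++ l.1, hr'⟩ := by
          cases r with
          | inl w => exact absurd hrl.symm hne
          | inr n =>
              have hn : n.1 = m.1 ++ l.1 := hrl
              exact ⟨hn ▸ n.2, congrArg Sum.inr (Subtype.ext hn)⟩
        obtain ⟨⟨hne', hB⟩, hr⟩ := hr
        rw [comp, dif_pos hB, hr]

end Monomial

namespace Monomial

variable {V A : Type*} {s t : A → V} {Z : Set (List A)}

open Classical in
noncomputable def ofList (l : List A) (h : InB s t Z l) (u : V) : PB s t Z :=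
  if hl : l = [] then .inl u else .inr ⟨l, hl, h⟩

open Classical in
@[simp] lemma toListP_ofList (l : List A) (h : InB s t Z l) (u : V) :
    toListP s t Z (ofList l h u) = l := by
  unfold ofList; split_ifs with h0
  · simp [h0]
  · simp [h0, toListP]

open Classical in
lemma srcP_ofList_nil {l : List A} (h : InB s t Z l) (u : V) (hl : l = []) :
    srcP s t Z (ofList l h u) = u := by
  subst hl; simp [ofList, srcP]

open Classical in
lemma tgtP_ofList_nil {l : List A} (h : InB s t Z l) (u : V) (hl : l = []) :
    tgtP s t Z (ofList l h u) = u := by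
  subst hl; simp [ofList, tgtP]

lemma comp_left_cancel {x x' p r : PB s t Z} (h : comp s t Z x p = some r)
    (h' : comp s t Z x' p = some r) : x = x' := by
  obtain ⟨hl, hc, hs, ht⟩ := comp_some_facts h
  obtain ⟨hl', hc', hs', ht'⟩ := comp_some_facts h'
  exact PB_ext (List.append_cancel_left (hl.symm.trans hl')) (hc.symm.trans hc')

lemma comp_right_cancel {p y y' r : PB s t Z} (h : comp s t Z p y = some r)
    (h' : comp s t Z p y' = some r) : y = y' := by
  obtain ⟨hl, hc, hs, ht⟩ := comp_some_facts h
  obtain ⟨hl', hc', hs', ht'⟩ := comp_some_facts h'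
  exact PB_ext (List.append_cancel_right (hl.symm.trans hl')) (hs.symm.trans hs')

lemma comp_assoc_some (hZ : MinimalRels s t Z) {x y z r : PB s t Z} :
    (∃ w, comp s t Z x y = some w ∧ comp s t Z w z = some r) ↔
      (∃ w, comp s t Z y z = some w ∧ comp s t Z x w = some r) := by
  constructor
  · rintro ⟨w, h1, h2⟩
    obtain ⟨l1, c1, s1, t1⟩ := comp_some_facts h1
    obtain ⟨l2, c2, s2, t2⟩ := comp_some_facts h2
    have hrl : toListP s t Z r =
        (toListP s t Z z ++ toListP s t Z y) ++ toListP s t Z x := by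
      rw [l2, l1, List.append_assoc]
    have hB : InB s t Z (toListP s t Z z ++ toListP s t Z y) :=
      InB_infix (InB_toListP hZ r) (hrl ▸ (List.prefix_append _ _).isInfix)
    set w' : PB s t Z := ofList _ hB (srcP s t Z z) with hw'
    have lw' : toListP s t Z w' = toListP s t Z z ++ toListP s t Z y := toListP_ofList ..
    have sw' : srcP s t Z w' = srcP s t Z z := by
      by_cases hz : toListP s t Z z = []
      · by_cases hy : toListP s t Z y = []
        · have hnil : toListP s t Z z ++ toListP s t Z y = [] := by rw [hz, hy]; rfl
          rw [hw', srcP_ofList_nil _ _ hnil]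
        · obtain ⟨hz', hz''⟩ := eq_inl_of_toListP_nil hz
          have ha := List.head?_eq_head hy
          have hw : (toListP s t Z w').head? = some ((toListP s t Z y).head hy) := by
            rw [lw', hz, List.nil_append, ha]
          have h1' : srcP s t Z w' = srcP s t Z y := by
            rw [srcP_eq_of_head? hw, srcP_eq_of_head? ha]
          rw [h1', ← s1, ← c2, hz'']
      · have ha := List.head?_eq_head hz
        have hw : (toListP s t Z w').head? = some ((toListP s t Z z).head hz) := by
          rw [lw', List.head?_append_of_ne_nil _ hz, ha]
        rw [srcP_eq_of_head? hw, srcP_eq_of_head? ha]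
    have tw' : tgtP s t Z w' = tgtP s t Z y := by
      by_cases hy : toListP s t Z y = []
      · obtain ⟨hy', hy''⟩ := eq_inl_of_toListP_nil hy
        have key : tgtP s t Z z = srcP s t Z y := c2.trans s1
        by_cases hz : toListP s t Z z = []
        · obtain ⟨hz', hz''⟩ := eq_inl_of_toListP_nil hz
          have hnil : toListP s t Z z ++ toListP s t Z y = [] := by rw [hz, hy]; rfl
          rw [hw', tgtP_ofList_nil _ _ hnil, ← hz'', key, hy'']
        · have ha := List.getLast?_eq_getLast hz
          have hw : (toListP s t Z w').getLast? = some ((toListP s t Z z).getLast hz) := by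
            rw [lw', hy, List.append_nil, ha]
          have h1' : tgtP s t Z w' = tgtP s t Z z := by
            rw [tgtP_eq_of_getLast? hw, tgtP_eq_of_getLast? ha]
          rw [h1', key, hy'']
      · have ha := List.getLast?_eq_getLast hy
        have hw : (toListP s t Z w').getLast? = some ((toListP s t Z y).getLast hy) := by
          rw [lw', List.getLast?_append_of_ne_nil _ hy, ha]
        rw [tgtP_eq_of_getLast? hw, tgtP_eq_of_getLast? ha]
    refine ⟨w', comp_eq_some_of lw' (c2.trans s1) sw' tw', comp_eq_some_of ?_ ?_ ?_ ?_⟩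
    · rw [hrl, lw']
    · rw [tw', c1]
    · rw [s2, sw']
    · rw [t2, t1]
  · rintro ⟨w, h1, h2⟩
    obtain ⟨l1, c1, s1, t1⟩ := comp_some_facts h1
    obtain ⟨l2, c2, s2, t2⟩ := comp_some_facts h2
    have hrl : toListP s t Z r =
        toListP s t Z z ++ (toListP s t Z y ++ toListP s t Z x) := by
      rw [l2, l1, List.append_assoc]
    have hB : InB s t Z (toListP s t Z y ++ toListP s t Z x) :=
      InB_infix (InB_toListP hZ r) (hrl ▸ ⟨toListP s t Z z, [], by simp⟩)
    set w' : PB s t Z := ofList _ hB (srcP s t Z y) with hw'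
    have lw' : toListP s t Z w' = toListP s t Z y ++ toListP s t Z x := toListP_ofList ..
    have sw' : srcP s t Z w' = srcP s t Z y := by
      by_cases hy : toListP s t Z y = []
      · obtain ⟨hy', hy''⟩ := eq_inl_of_toListP_nil hy
        by_cases hx : toListP s t Z x = []
        · have hnil : toListP s t Z y ++ toListP s t Z x = [] := by rw [hy, hx]; rfl
          rw [hw', srcP_ofList_nil _ _ hnil]
        · have ha := List.head?_eq_head hx
          have hw : (toListP s t Z w').head? = some ((toListP s t Z x).head hx) := by
            rw [lw', hy, List.nil_append, ha]
          have h1' : srcP s t Z w' = srcP s t Z x := by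
            rw [srcP_eq_of_head? hw, srcP_eq_of_head? ha]
          rw [h1', ← c2, t1, hy'']
      · have ha := List.head?_eq_head hy
        have hw : (toListP s t Z w').head? = some ((toListP s t Z y).head hy) := by
          rw [lw', List.head?_append_of_ne_nil _ hy, ha]
        rw [srcP_eq_of_head? hw, srcP_eq_of_head? ha]
    have tw' : tgtP s t Z w' = tgtP s t Z x := by
      by_cases hx : toListP s t Z x = []
      · obtain ⟨hx', hx''⟩ := eq_inl_of_toListP_nil hx
        by_cases hy : toListP s t Z y = []
        · obtain ⟨hy', hy''⟩ := eq_inl_of_toListP_nil hy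
          have hnil : toListP s t Z y ++ toListP s t Z x = [] := by rw [hy, hx]; rfl
          rw [hw', tgtP_ofList_nil _ _ hnil, ← hy'', ← t1, c2, hx'']
        · have ha := List.getLast?_eq_getLast hy
          have hw : (toListP s t Z w').getLast? = some ((toListP s t Z y).getLast hy) := by
            rw [lw', hx, List.append_nil, ha]
          have h1' : tgtP s t Z w' = tgtP s t Z y := by
            rw [tgtP_eq_of_getLast? hw, tgtP_eq_of_getLast? ha]
          rw [h1', ← t1, c2, hx'']
      · have ha := List.getLast?_eq_getLast hx
        have hw : (toListP s t Z w').getLast? = some ((toListP s t Z x).getLast hx) := by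
          rw [lw', List.getLast?_append_of_ne_nil _ hx, ha]
        rw [tgtP_eq_of_getLast? hw, tgtP_eq_of_getLast? ha]
    refine ⟨w', comp_eq_some_of lw' (t1.symm.trans c2) sw' tw', comp_eq_some_of ?_ ?_ ?_ ?_⟩
    · rw [hrl, lw']
    · rw [sw', c1]
    · rw [s2, s1]
    · rw [tw', t2]

end Monomial

namespace Monomial

variable {V A : Type*} {s t : A → V} {Z : Set (List A)} {N : Set (PB s t Z × PB s t Z)}

lemma NeatClass.neat (hN : NeatClass N) {q : PB s t Z × PB s t Z} (hq : q ∈ N) :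
    IsNeatPB q.1 q.2 := by
  obtain ⟨p, -, -, h⟩ := hN; exact h q hq

lemma NeatClass.cyclic (hN : NeatClass N) {q : PB s t Z × PB s t Z} (hq : q ∈ N) :
    IsCyclicPairPB q.1 q.2 := by
  obtain ⟨p, hp, hEq, -⟩ := hN
  rw [hEq] at hq
  have key : ∀ a b : PB s t Z × PB s t Z, Relation.EqvGen ElemRelPB a b →
      a = b ∨ (IsCyclicPairPB a.1 a.2 ∧ IsCyclicPairPB b.1 b.2) := by
    intro a b h
    induction h with
    | rel x y h => exact Or.inr ⟨h.1, h.2.1⟩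
    | refl x => exact Or.inl rfl
    | symm x y h ih =>
        rcases ih with h1 | h1
        · exact Or.inl h1.symm
        · exact Or.inr ⟨h1.2, h1.1⟩
    | trans x y z h1 h2 ih1 ih2 =>
        rcases ih1 with rfl | c1
        · exact ih2
        · rcases ih2 with rfl | c2
          · exact Or.inr c1
          · exact Or.inr ⟨c1.1, c2.2⟩
  rcases key p q hq with rfl | c
  · exact hp
  · exact c.2

lemma NeatClass.closed (hN : NeatClass N) {q q' : PB s t Z × PB s t Z} (hq : q ∈ N)
    (h : ElemRelPB q q') : q' ∈ N := by
  obtain ⟨p, -, hEq, -⟩ := hN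
  rw [hEq] at hq ⊢
  exact Relation.EqvGen.trans _ _ _ hq (Relation.EqvGen.rel _ _ h)

lemma NeatClass.closed' (hN : NeatClass N) {q q' : PB s t Z × PB s t Z} (hq : q ∈ N)
    (h : ElemRelPB q' q) : q' ∈ N := by
  obtain ⟨p, -, hEq, -⟩ := hN
  rw [hEq] at hq ⊢
  exact Relation.EqvGen.trans _ _ _ hq (Relation.EqvGen.symm _ _ (Relation.EqvGen.rel _ _ h))

lemma transfer_arrow_left (hZ : MinimalRels s t Z) (hN : NeatClass N) {b : A}
    (pb : PB s t Z) (hpb : toListP s t Z pb = [b]) (x δ : PB s t Z) :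
    (∃ γ, (γ, δ) ∈ N ∧ comp s t Z γ pb = some x) ↔
      (∃ y, comp s t Z pb y = some δ ∧ (x, y) ∈ N) := by
  have spb : srcP s t Z pb = s b := srcP_eq_of_head? (by rw [hpb]; rfl)
  have tpb : tgtP s t Z pb = t b := tgtP_eq_of_getLast? (by rw [hpb]; simp)
  constructor
  · rintro ⟨γ, hγN, hc⟩
    obtain ⟨l1, c1, s1, t1⟩ := comp_some_facts hc
    have lx : toListP s t Z x = b :: toListP s t Z γ := by rw [l1, hpb]; rfl
    have hcycγδ := hN.cyclic hγN
    have hneat := hN.neat hγN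
    have hlast : (toListP s t Z δ).getLast? = some b :=
      hneat.2.2.1 b ⟨tpb ▸ c1, lx ▸ InB_toListP hZ x⟩
    obtain ⟨q', hq'⟩ := List.getLast?_eq_some_iff.mp hlast
    have hBq' : InB s t Z q' :=
      InB_infix (InB_toListP hZ δ) (hq' ▸ (List.prefix_append _ _).isInfix)
    set y : PB s t Z := ofList q' hBq' (s b) with hy
    have ly : toListP s t Z y = q' := toListP_ofList ..
    have ty : tgtP s t Z y = s b := by
      by_cases hq'0 : q' = []
      · rw [hy]; exact tgtP_ofList_nil _ _ hq'0
      · have hju : t (q'.getLast hq'0) = s b :=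
          chain'_junction (l₁ := q') (l₂ := [b]) (hq' ▸ (InB_toListP hZ δ).1)
            (List.getLast?_eq_getLast hq'0) rfl
        rw [tgtP_eq_of_getLast? (x := y) (by rw [ly]; exact List.getLast?_eq_getLast hq'0), hju]
    have sδy : srcP s t Z δ = srcP s t Z y := by
      by_cases hq'0 : q' = []
      · have : (toListP s t Z δ).head? = some b := by rw [hq', hq'0]; rfl
        rw [srcP_eq_of_head? this, hy, srcP_ofList_nil _ _ hq'0]
      · have hh := List.head?_eq_head hq'0
        rw [srcP_eq_of_head? (x := δ)
            (by rw [hq', List.head?_append_of_ne_nil _ hq'0, hh]),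
          srcP_eq_of_head? (x := y) (by rw [ly, hh])]
    have hcomp : comp s t Z pb y = some δ := by
      refine comp_eq_some_of ?_ (ty.trans spb.symm) sδy ?_
      · rw [ly, hpb, hq']
      · rw [tpb, tgtP_eq_of_getLast? hlast]
    have sx : srcP s t Z x = s b := srcP_eq_of_head? (by rw [lx]; rfl)
    have cycxy : IsCyclicPairPB x y := by
      refine ⟨ty.trans sx.symm, ?_⟩
      rw [t1, hcycγδ.2, sδy]
    have elem : ElemRelPB (x, y) (γ, δ) :=
      ⟨cycxy, hcycγδ, Or.inr ⟨b, lx, by rw [ly, hq']⟩⟩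
    exact ⟨y, hcomp, hN.closed' hγN elem⟩
  · rintro ⟨y, hc, hyN⟩
    obtain ⟨l1, c1, s1, t1⟩ := comp_some_facts hc
    have lδ : toListP s t Z δ = toListP s t Z y ++ [b] := by rw [l1, hpb]
    have hcycxy := hN.cyclic hyN
    have hneat := hN.neat hyN
    have hhead : (toListP s t Z x).head? = some b :=
      hneat.2.1 b ⟨(c1.trans spb).symm, lδ ▸ InB_toListP hZ δ⟩
    obtain ⟨lγ, hlγ⟩ : ∃ lγ, toListP s t Z x = b :: lγ := by
      cases hxl : toListP s t Z x with
      | nil => rw [hxl] at hhead; exact absurd hhead (by simp)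
      | cons a l' =>
          rw [hxl] at hhead
          exact ⟨l', by rw [Option.some_inj.mp hhead.symm]⟩
    have hBγ : InB s t Z lγ :=
      InB_infix (InB_toListP hZ x) (hlγ ▸ (List.suffix_cons b lγ).isInfix)
    set γ : PB s t Z := ofList lγ hBγ (t b) with hγ
    have lγ' : toListP s t Z γ = lγ := toListP_ofList ..
    have sγ : srcP s t Z γ = t b := by
      by_cases h0 : lγ = []
      · rw [hγ]; exact srcP_ofList_nil _ _ h0
      · have hpath : IsPath s t ([b] ++ lγ) := by
          have h' := (InB_toListP hZ x).1
          rw [hlγ] at h'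
          exact h'
        have hju : t b = s (lγ.head h0) :=
          chain'_junction (l₁ := [b]) (l₂ := lγ) hpath (by simp) (List.head?_eq_head h0)
        rw [srcP_eq_of_head? (x := γ) (by rw [lγ']; exact List.head?_eq_head h0), ← hju]
    have tx : tgtP s t Z x = tgtP s t Z γ := by
      by_cases h0 : lγ = []
      · have : (toListP s t Z x).getLast? = some b := by rw [hlγ, h0]; simp
        rw [tgtP_eq_of_getLast? this, hγ, tgtP_ofList_nil _ _ h0]
      · have hh := List.getLast?_eq_getLast h0
        rw [tgtP_eq_of_getLast? (x := x)
            (by rw [hlγ, show b :: lγ = [b] ++ lγ from rfl,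
              List.getLast?_append_of_ne_nil _ h0, hh]),
          tgtP_eq_of_getLast? (x := γ) (by rw [lγ', hh])]
    have sx : srcP s t Z x = s b := srcP_eq_of_head? hhead
    have hcompγ : comp s t Z γ pb = some x := by
      refine comp_eq_some_of ?_ (tpb.trans sγ.symm) (sx.trans spb.symm) tx
      rw [lγ', hpb, hlγ]; rfl
    have cycγδ : IsCyclicPairPB γ δ := by
      constructor
      · rw [t1, tpb, sγ]
      · rw [← tx, hcycxy.2, s1]
    have elem : ElemRelPB (x, y) (γ, δ) :=
      ⟨hcycxy, cycγδ, Or.inr ⟨b, by rw [hlγ, lγ'], lδ⟩⟩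
    exact ⟨γ, hN.closed hyN elem, hcompγ⟩

end Monomial

namespace Monomial

variable {V A : Type*} {s t : A → V} {Z : Set (List A)} {N : Set (PB s t Z × PB s t Z)}

lemma transfer_arrow_right (hZ : MinimalRels s t Z) (hN : NeatClass N) {b : A}
    (pb : PB s t Z) (hpb : toListP s t Z pb = [b]) (x δ : PB s t Z) :
    (∃ γ, (γ, δ) ∈ N ∧ comp s t Z pb γ = some x) ↔
      (∃ y, comp s t Z y pb = some δ ∧ (x, y) ∈ N) := by
  have spb : srcP s t Z pb = s b := srcP_eq_of_head? (by rw [hpb]; rfl)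
  have tpb : tgtP s t Z pb = t b := tgtP_eq_of_getLast? (by rw [hpb]; simp)
  constructor
  · rintro ⟨γ, hγN, hc⟩
    obtain ⟨l1, c1, s1, t1⟩ := comp_some_facts hc
    have lx : toListP s t Z x = toListP s t Z γ ++ [b] := by rw [l1, hpb]
    have hcycγδ := hN.cyclic hγN
    have hneat := hN.neat hγN
    have hhead : (toListP s t Z δ).head? = some b :=
      hneat.2.2.2 b ⟨(c1.trans spb).symm, lx ▸ InB_toListP hZ x⟩
    obtain ⟨q', hδl⟩ : ∃ q', toListP s t Z δ = b :: q' := by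
      cases hdl : toListP s t Z δ with
      | nil => rw [hdl] at hhead; exact absurd hhead (by simp)
      | cons a l' =>
          rw [hdl] at hhead
          exact ⟨l', by rw [Option.some_inj.mp hhead.symm]⟩
    have hBq' : InB s t Z q' :=
      InB_infix (InB_toListP hZ δ) (hδl ▸ (List.suffix_cons b q').isInfix)
    set y : PB s t Z := ofList q' hBq' (t b) with hy
    have ly : toListP s t Z y = q' := toListP_ofList ..
    have sy : srcP s t Z y = t b := by
      by_cases h0 : q' = []
      · rw [hy]; exact srcP_ofList_nil _ _ h0
      · have hpath : IsPath s t ([b] ++ q') := by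
          have h' := (InB_toListP hZ δ).1
          rw [hδl] at h'
          exact h'
        have hju : t b = s (q'.head h0) :=
          chain'_junction (l₁ := [b]) (l₂ := q') hpath (by simp) (List.head?_eq_head h0)
        rw [srcP_eq_of_head? (x := y) (by rw [ly]; exact List.head?_eq_head h0), ← hju]
    have tδy : tgtP s t Z δ = tgtP s t Z y := by
      by_cases h0 : q' = []
      · have : (toListP s t Z δ).getLast? = some b := by rw [hδl, h0]; simp
        rw [tgtP_eq_of_getLast? this, hy, tgtP_ofList_nil _ _ h0]
      · have hh := List.getLast?_eq_getLast h0
        rw [tgtP_eq_of_getLast? (x := δ)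
            (by rw [hδl, show b :: q' = [b] ++ q' from rfl,
              List.getLast?_append_of_ne_nil _ h0, hh]),
          tgtP_eq_of_getLast? (x := y) (by rw [ly, hh])]
    have sδ : srcP s t Z δ = s b := srcP_eq_of_head? hhead
    have hcomp : comp s t Z y pb = some δ := by
      refine comp_eq_some_of ?_ (tpb.trans sy.symm) (sδ.trans spb.symm) tδy
      rw [hpb, ly]; exact hδl
    have cycxy : IsCyclicPairPB x y :=
      ⟨tδy.symm.trans (hcycγδ.1.trans s1.symm), (t1.trans tpb).trans sy.symm⟩
    have elem : ElemRelPB (x, y) (γ, δ) :=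
      ⟨cycxy, hcycγδ, Or.inl ⟨b, lx, by rw [ly]; exact hδl⟩⟩
    exact ⟨y, hcomp, hN.closed' hγN elem⟩
  · rintro ⟨y, hc, hyN⟩
    obtain ⟨l1, c1, s1, t1⟩ := comp_some_facts hc
    have lδ : toListP s t Z δ = b :: toListP s t Z y := by rw [l1, hpb]; rfl
    have hcycxy := hN.cyclic hyN
    have hneat := hN.neat hyN
    have hlast : (toListP s t Z x).getLast? = some b :=
      hneat.1 b ⟨tpb.symm.trans c1, lδ ▸ InB_toListP hZ δ⟩
    obtain ⟨lγ, hlγ⟩ := List.getLast?_eq_some_iff.mp hlast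
    have hBγ : InB s t Z lγ :=
      InB_infix (InB_toListP hZ x) (hlγ ▸ (List.prefix_append _ _).isInfix)
    set γ : PB s t Z := ofList lγ hBγ (s b) with hγ
    have lγ' : toListP s t Z γ = lγ := toListP_ofList ..
    have tγ : tgtP s t Z γ = s b := by
      by_cases h0 : lγ = []
      · rw [hγ]; exact tgtP_ofList_nil _ _ h0
      · have hju : t (lγ.getLast h0) = s b :=
          chain'_junction (l₁ := lγ) (l₂ := [b]) (hlγ ▸ (InB_toListP hZ x).1)
            (List.getLast?_eq_getLast h0) rfl
        rw [tgtP_eq_of_getLast? (x := γ) (by rw [lγ']; exact List.getLast?_eq_getLast h0), hju]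
    have sxγ : srcP s t Z x = srcP s t Z γ := by
      by_cases h0 : lγ = []
      · have : (toListP s t Z x).head? = some b := by rw [hlγ, h0]; rfl
        rw [srcP_eq_of_head? this, hγ, srcP_ofList_nil _ _ h0]
      · have hh := List.head?_eq_head h0
        rw [srcP_eq_of_head? (x := x)
            (by rw [hlγ, List.head?_append_of_ne_nil _ h0, hh]),
          srcP_eq_of_head? (x := γ) (by rw [lγ', hh])]
    have tx : tgtP s t Z x = t b := tgtP_eq_of_getLast? hlast
    have hcompγ : comp s t Z pb γ = some x := by
      refine comp_eq_some_of ?_ (tγ.trans spb.symm) sxγ (tx.trans tpb.symm)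
      rw [lγ', hpb]; exact hlγ
    have cycγδ : IsCyclicPairPB γ δ :=
      ⟨(t1.trans hcycxy.1).trans sxγ, tγ.trans (s1.trans spb).symm⟩
    have elem : ElemRelPB (x, y) (γ, δ) :=
      ⟨hcycxy, cycγδ, Or.inl ⟨b, by rw [lγ']; exact hlγ, lδ⟩⟩
    exact ⟨γ, hN.closed hyN elem, hcompγ⟩

end Monomial

namespace Monomial

variable {V A : Type*} {s t : A → V} {Z : Set (List A)} {N : Set (PB s t Z × PB s t Z)}

lemma transfer_left (hZ : MinimalRels s t Z) (hN : NeatClass N) :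
    ∀ (n : ℕ) (p : PB s t Z), (toListP s t Z p).length ≤ n → ∀ x δ : PB s t Z,
      ((∃ γ, (γ, δ) ∈ N ∧ comp s t Z γ p = some x) ↔
        (∃ q, comp s t Z p q = some δ ∧ (x, q) ∈ N)) := by
  intro n
  induction n with
  | zero =>
      intro p hlen x δ
      have hp0 : toListP s t Z p = [] := List.length_eq_zero_iff.mp (Nat.le_zero.mp hlen)
      obtain ⟨hp', hp''⟩ := eq_inl_of_toListP_nil hp0
      constructor
      · rintro ⟨γ, hγN, hc⟩
        obtain ⟨l1, c1, s1, t1⟩ := comp_some_facts hc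
        have hxγ : x = γ := PB_ext (by rw [l1, hp0]; rfl)
          (s1.trans (hp''.symm.trans c1))
        subst hxγ
        have cyc := hN.cyclic hγN
        have h2 : tgtP s t Z δ = srcP s t Z p := cyc.1.trans (c1.symm.trans hp'')
        refine ⟨δ, comp_eq_some_of (x := p) (y := δ) (r := δ)
          (by rw [hp0, List.append_nil]) h2 rfl (h2.trans hp''.symm), hγN⟩
      · rintro ⟨q, hc, hqN⟩
        obtain ⟨l1, c1, s1, t1⟩ := comp_some_facts hc
        have hqδ : q = δ :=
          PB_ext (x := q) (y := δ)
            (show toListP s t Z δ = _ by rw [l1, hp0, List.append_nil]).symm s1.symm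
        subst hqδ
        have cyc := hN.cyclic hqN
        refine ⟨x, hqN, comp_eq_some_of (x := x) (y := p) (r := x)
          (by rw [hp0]; rfl) (t1.symm.trans cyc.1)
          (cyc.1.symm.trans (t1.trans hp'')) rfl⟩
  | succ n IH =>
      intro p hlen x δ
      rcases Nat.lt_or_ge (toListP s t Z p).length (n+1) with hlt | hge
      · exact IH p (Nat.lt_succ_iff.mp hlt) x δ
      · obtain ⟨b, m, hpl⟩ : ∃ b m, toListP s t Z p = b :: m := by
          cases hpl : toListP s t Z p with
          | nil => rw [hpl] at hge; simp at hge
          | cons b m => exact ⟨b, m, rfl⟩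
        have hBb : InB s t Z [b] := by
          refine InB_infix (InB_toListP hZ p) ?_
          rw [hpl]; exact (List.prefix_append [b] m).isInfix
        have hBm : InB s t Z m := by
          refine InB_infix (InB_toListP hZ p) ?_
          rw [hpl]; exact (List.suffix_cons b m).isInfix
        set pb : PB s t Z := ofList [b] hBb (s b) with hpb
        set p₁ : PB s t Z := ofList m hBm (t b) with hp₁
        have hpbl : toListP s t Z pb = [b] := toListP_ofList ..
        have hp₁l : toListP s t Z p₁ = m := toListP_ofList ..
        have hm_len : (toListP s t Z p₁).length ≤ n := by
          rw [hp₁l]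
          have := hlen; rw [hpl] at this; simpa using this
        have tpb : tgtP s t Z pb = t b := tgtP_eq_of_getLast? (by rw [hpbl]; simp)
        have hsplit : comp s t Z p₁ pb = some p := by
          refine comp_eq_some_of ?_ ?_ ?_ ?_
          · rw [hpbl, hp₁l, hpl]; rfl
          · by_cases h0 : m = []
            · rw [tpb, hp₁]; exact (srcP_ofList_nil hBm (t b) h0).symm
            · have hpath : IsPath s t ([b] ++ m) := by
                have h' := (InB_toListP hZ p).1
                rw [hpl] at h'
                exact h'
              have hju : t b = s (m.head h0) :=
                chain'_junction (l₁ := [b]) (l₂ := m) hpath (by simp)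
                  (List.head?_eq_head h0)
              rw [tpb, srcP_eq_of_head? (x := p₁)
                (by rw [hp₁l]; exact List.head?_eq_head h0), ← hju]
          · rw [srcP_eq_of_head? (x := p) (by rw [hpl]; rfl),
              srcP_eq_of_head? (x := pb) (by rw [hpbl]; rfl)]
          · by_cases h0 : m = []
            · rw [tgtP_eq_of_getLast? (x := p) (a := b) (by rw [hpl, h0]; simp), hp₁]
              exact (tgtP_ofList_nil hBm (t b) h0).symm
            · have hh := List.getLast?_eq_getLast h0
              rw [tgtP_eq_of_getLast? (x := p)
                  (by rw [hpl, show b :: m = [b] ++ m from rfl,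
                    List.getLast?_append_of_ne_nil _ h0, hh]),
                tgtP_eq_of_getLast? (x := p₁) (by rw [hp₁l, hh])]
        have D1 : ∀ γ x', comp s t Z γ p = some x' ↔
            ∃ w, comp s t Z γ p₁ = some w ∧ comp s t Z w pb = some x' := by
          intro γ x'
          constructor
          · intro h'
            exact (comp_assoc_some hZ).mpr ⟨p, hsplit, h'⟩
          · intro h'
            obtain ⟨w, hw, h''⟩ := (comp_assoc_some hZ).mp h'
            rw [hsplit, Option.some_inj] at hw
            subst hw
            exact h''
        have D2 : ∀ q, comp s t Z p q = some δ ↔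
            ∃ y, comp s t Z pb q = some y ∧ comp s t Z p₁ y = some δ := by
          intro q
          constructor
          · intro h'
            exact (comp_assoc_some hZ).mp ⟨p, hsplit, h'⟩
          · rintro ⟨y, h1, h2⟩
            obtain ⟨w, hw, h''⟩ := (comp_assoc_some hZ).mpr ⟨y, h1, h2⟩
            rw [hsplit, Option.some_inj] at hw
            subst hw
            exact h''
        constructor
        · rintro ⟨γ, hγN, hc⟩
          obtain ⟨w, hw1, hw2⟩ := (D1 γ x).mp hc
          obtain ⟨q₁, hq₁, hwq₁⟩ := (IH p₁ hm_len w δ).mp ⟨γ, hγN, hw1⟩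
          obtain ⟨y, hy1, hy2⟩ := (transfer_arrow_left hZ hN pb hpbl x q₁).mp ⟨w, hwq₁, hw2⟩
          exact ⟨y, (D2 y).mpr ⟨q₁, hy1, hq₁⟩, hy2⟩
        · rintro ⟨q, hq1, hq2⟩
          obtain ⟨y', hy1, hy2⟩ := (D2 q).mp hq1
          obtain ⟨w, hwN, hw2⟩ :=
            (transfer_arrow_left hZ hN pb hpbl x y').mpr ⟨q, hy1, hq2⟩
          obtain ⟨γ, hγN, hγc⟩ := (IH p₁ hm_len w δ).mpr ⟨y', hy2, hwN⟩
          exact ⟨γ, hγN, (D1 γ x).mpr ⟨w, hγc, hw2⟩⟩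

lemma transfer_right (hZ : MinimalRels s t Z) (hN : NeatClass N) :
    ∀ (n : ℕ) (p : PB s t Z), (toListP s t Z p).length ≤ n → ∀ x δ : PB s t Z,
      ((∃ γ, (γ, δ) ∈ N ∧ comp s t Z p γ = some x) ↔
        (∃ q, comp s t Z q p = some δ ∧ (x, q) ∈ N)) := by
  intro n
  induction n with
  | zero =>
      intro p hlen x δ
      have hp0 : toListP s t Z p = [] := List.length_eq_zero_iff.mp (Nat.le_zero.mp hlen)
      obtain ⟨hp', hp''⟩ := eq_inl_of_toListP_nil hp0
      constructor
      · rintro ⟨γ, hγN, hc⟩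
        obtain ⟨l1, c1, s1, t1⟩ := comp_some_facts hc
        have hxγ : x = γ := PB_ext (by rw [l1, hp0, List.append_nil]) s1
        subst hxγ
        have cyc := hN.cyclic hγN
        refine ⟨δ, comp_eq_some_of (x := δ) (y := p) (r := δ)
          (by rw [hp0]; rfl) (t1.symm.trans cyc.2)
          (cyc.2.symm.trans (t1.trans hp'')) rfl, hγN⟩
      · rintro ⟨q, hc, hqN⟩
        obtain ⟨l1, c1, s1, t1⟩ := comp_some_facts hc
        have hqδ : q = δ := PB_ext (x := q) (y := δ)
          (by rw [l1, hp0]; rfl) (c1.symm.trans (hp''.trans s1.symm))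
        subst hqδ
        have cyc := hN.cyclic hqN
        refine ⟨x, hqN, comp_eq_some_of (x := p) (y := x) (r := x)
          (by rw [hp0, List.append_nil]) (cyc.2.trans s1) rfl
          ((cyc.2.trans s1).trans hp''.symm)⟩
  | succ n IH =>
      intro p hlen x δ
      rcases Nat.lt_or_ge (toListP s t Z p).length (n+1) with hlt | hge
      · exact IH p (Nat.lt_succ_iff.mp hlt) x δ
      · have hne : toListP s t Z p ≠ [] := by
          intro h0; rw [h0] at hge; simp at hge
        obtain ⟨m, hpl⟩ :=
          List.getLast?_eq_some_iff.mp (List.getLast?_eq_getLast hne)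
        set b := (toListP s t Z p).getLast hne with hb
        have hBb : InB s t Z [b] := by
          refine InB_infix (InB_toListP hZ p) ?_
          rw [hpl]; exact (List.suffix_append m [b]).isInfix
        have hBm : InB s t Z m := by
          refine InB_infix (InB_toListP hZ p) ?_
          rw [hpl]; exact (List.prefix_append m [b]).isInfix
        set pb : PB s t Z := ofList [b] hBb (s b) with hpb
        set p₁ : PB s t Z := ofList m hBm (s b) with hp₁
        have hpbl : toListP s t Z pb = [b] := toListP_ofList ..
        have hp₁l : toListP s t Z p₁ = m := toListP_ofList ..
        have hm_len : (toListP s t Z p₁).length ≤ n := by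
          rw [hp₁l]
          have := hlen; rw [hpl] at this; simpa using this
        have spb : srcP s t Z pb = s b := srcP_eq_of_head? (by rw [hpbl]; rfl)
        have hsplit : comp s t Z pb p₁ = some p := by
          refine comp_eq_some_of ?_ ?_ ?_ ?_
          · rw [hpbl, hp₁l, hpl]
          · by_cases h0 : m = []
            · rw [spb, hp₁]; exact tgtP_ofList_nil hBm (s b) h0
            · have hju : t (m.getLast h0) = s b :=
                chain'_junction (l₁ := m) (l₂ := [b]) (hpl ▸ (InB_toListP hZ p).1)
                  (List.getLast?_eq_getLast h0) rfl
              rw [spb, tgtP_eq_of_getLast? (x := p₁)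
                (by rw [hp₁l]; exact List.getLast?_eq_getLast h0), hju]
          · by_cases h0 : m = []
            · rw [srcP_eq_of_head? (x := p) (by rw [hpl, h0]; rfl), hp₁]
              exact (srcP_ofList_nil hBm (s b) h0).symm
            · have hh := List.head?_eq_head h0
              rw [srcP_eq_of_head? (x := p)
                  (by rw [hpl, List.head?_append_of_ne_nil _ h0, hh]),
                srcP_eq_of_head? (x := p₁) (by rw [hp₁l, hh])]
          · rw [tgtP_eq_of_getLast? (x := p) (by rw [hpl]; exact List.getLast?_concat),
              tgtP_eq_of_getLast? (x := pb) (a := b) (by rw [hpbl]; simp)]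
        have D1 : ∀ γ x', comp s t Z p γ = some x' ↔
            ∃ w, comp s t Z p₁ γ = some w ∧ comp s t Z pb w = some x' := by
          intro γ x'
          constructor
          · intro h'
            exact (comp_assoc_some hZ).mp ⟨p, hsplit, h'⟩
          · rintro ⟨w, h1, h2⟩
            obtain ⟨w', hw, h''⟩ := (comp_assoc_some hZ).mpr ⟨w, h1, h2⟩
            rw [hsplit, Option.some_inj] at hw
            subst hw
            exact h''
        have D2 : ∀ q, comp s t Z q p = some δ ↔
            ∃ y, comp s t Z q pb = some y ∧ comp s t Z y p₁ = some δ := by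
          intro q
          constructor
          · intro h'
            exact (comp_assoc_some hZ).mpr ⟨p, hsplit, h'⟩
          · rintro ⟨y, h1, h2⟩
            obtain ⟨w, hw, h''⟩ := (comp_assoc_some hZ).mp ⟨y, h1, h2⟩
            rw [hsplit, Option.some_inj] at hw
            subst hw
            exact h''
        constructor
        · rintro ⟨γ, hγN, hc⟩
          obtain ⟨w, hw1, hw2⟩ := (D1 γ x).mp hc
          obtain ⟨q₁, hq₁, hwq₁⟩ := (IH p₁ hm_len w δ).mp ⟨γ, hγN, hw1⟩
          obtain ⟨y, hy1, hy2⟩ := (transfer_arrow_right hZ hN pb hpbl x q₁).mp ⟨w, hwq₁, hw2⟩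
          exact ⟨y, (D2 y).mpr ⟨q₁, hy1, hq₁⟩, hy2⟩
        · rintro ⟨q, hq1, hq2⟩
          obtain ⟨y', hy1, hy2⟩ := (D2 q).mp hq1
          obtain ⟨w, hwN, hw2⟩ :=
            (transfer_arrow_right hZ hN pb hpbl x y').mpr ⟨q, hy1, hq2⟩
          obtain ⟨γ, hγN, hγc⟩ := (IH p₁ hm_len w δ).mpr ⟨y', hy2, hwN⟩
          exact ⟨γ, hγN, (D1 γ x).mpr ⟨w, hγc, hw2⟩⟩

end Monomial

namespace Monomial

open Classical

lemma sum_if_unique {I k : Type*} [Fintype I] [AddCommMonoid k] (P : I → Prop)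
    [DecidablePred P] (hu : ∀ a b, P a → P b → a = b) (c : k) :
    (∑ γ : I, if P γ then c else 0) = if ∃ γ, P γ then c else 0 := by
  by_cases hex : ∃ γ, P γ
  · obtain ⟨γ₀, h₀⟩ := hex
    rw [if_pos ⟨γ₀, h₀⟩, Finset.sum_eq_single γ₀]
    · rw [if_pos h₀]
    · intro b _ hb
      rw [if_neg fun hPb => hb (hu b γ₀ hPb h₀)]
    · intro h; exact absurd (Finset.mem_univ γ₀) h
  · rw [if_neg hex]
    exact Finset.sum_eq_zero fun γ _ => if_neg fun h => hex ⟨γ, h⟩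

variable {V A : Type*} {s t : A → V} {Z : Set (List A)}
variable (k : Type*) [Field k] [Fintype (PB s t Z)]

lemma sumByRel_apply_eq (R S : PB s t Z → PB s t Z → Prop)
    (hu : ∀ x z y y', R x y → S y z → R x y' → S y' z → y = y')
    (f : MSp s t Z k) (x : PB s t Z) :
    sumByRel s t Z k R (sumByRel s t Z k S f) x
      = ∑ z, if ∃ y, R x y ∧ S y z then f z else 0 := by
  show (∑ y, if R x y then (∑ z, if S y z then f z else 0) else 0) = _
  rw [Finset.sum_congr rfl (fun y _ =>
    show (if R x y then (∑ z, if S y z then f z else 0) else 0)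
        = ∑ z, if R x y ∧ S y z then f z else 0 by
      by_cases h : R x y
      · rw [if_pos h]
        exact Finset.sum_congr rfl fun z _ => by
          by_cases h2 : S y z
          · rw [if_pos h2, if_pos ⟨h, h2⟩]
          · rw [if_neg h2, if_neg fun hc => h2 hc.2]
      · rw [if_neg h]
        exact (Finset.sum_eq_zero fun z _ => if_neg fun hc => h hc.1).symm)]
  rw [Finset.sum_comm]
  exact Finset.sum_congr rfl fun z _ =>
    sum_if_unique (fun y => R x y ∧ S y z) (fun a b ha hb => hu x z a b ha.1 ha.2 hb.1 hb.2) (f z)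

lemma sumByRel_comp_congr (R S R' S' : PB s t Z → PB s t Z → Prop)
    (hu : ∀ x z y y', R x y → S y z → R x y' → S y' z → y = y')
    (hu' : ∀ x z y y', R' x y → S' y z → R' x y' → S' y' z → y = y')
    (hiff : ∀ x z, (∃ y, R x y ∧ S y z) ↔ (∃ y, R' x y ∧ S' y z)) :
    (sumByRel s t Z k R) ∘ₗ (sumByRel s t Z k S)
      = (sumByRel s t Z k R') ∘ₗ (sumByRel s t Z k S') := by
  refine LinearMap.ext fun f => funext fun x => ?_
  show sumByRel s t Z k R (sumByRel s t Z k S f) x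
    = sumByRel s t Z k R' (sumByRel s t Z k S' f) x
  rw [sumByRel_apply_eq k R S hu, sumByRel_apply_eq k R' S' hu']
  exact Finset.sum_congr rfl fun z _ => if_congr (hiff x z) rfl rfl

end Monomial

open Monomial in
/-- for a neat equivalence class `N` of cyclic pairs, the
`k`-linear map `ψ_N : DA → A` defined on the dual basis by
`ψ_N(γ*) = Σ_{(γ,δ) ∈ N} δ` is a morphism of `A–A`-bimodules. -/
theorem psi_is_bimodule_map {V A k : Type*} [Field k] (s t : A → V)
    (Z : Set (List A)) (hZ : MinimalRels s t Z) [Fintype (PB s t Z)]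
    (N : Set (PB s t Z × PB s t Z)) (hN : NeatClass N) :
    (∀ γ : PB s t Z, psiLin s t Z k N (db s t Z k γ) = psiTarget s t Z k N γ) ∧
      IsBimodMap s t Z k (psiLin s t Z k N) := by
  classical
  constructor
  · intro γ
    funext δ
    show (∑ γ' : PB s t Z, if (γ', δ) ∈ N then (if γ' = γ then (1:k) else 0) else 0)
      = (if (γ, δ) ∈ N then (1:k) else 0)
    rw [Finset.sum_congr rfl (fun γ' _ =>
      show (if (γ', δ) ∈ N then (if γ' = γ then (1:k) else 0) else 0)
          = if (γ', δ) ∈ N ∧ γ' = γ then (1:k) else 0 by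
        by_cases h1 : (γ', δ) ∈ N
        · by_cases h2 : γ' = γ
          · rw [if_pos h1, if_pos h2, if_pos ⟨h1, h2⟩]
          · rw [if_pos h1, if_neg h2, if_neg fun hc => h2 hc.2]
        · rw [if_neg h1, if_neg fun hc => h1 hc.1])]
    rw [sum_if_unique (fun γ' => (γ', δ) ∈ N ∧ γ' = γ)
      (fun a b ha hb => ha.2.trans hb.2.symm) (1:k)]
    exact if_congr ⟨fun ⟨γ', h1, h2⟩ => h2 ▸ h1, fun h => ⟨γ, h, rfl⟩⟩ rfl rfl
  · intro p
    constructor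
    · exact sumByRel_comp_congr k (fun δ y => (y, δ) ∈ N)
        (fun y z => comp s t Z y p = some z)
        (fun δ y => comp s t Z p y = some δ) (fun y z => (z, y) ∈ N)
        (fun x z y y' _ hS _ hS' => comp_left_cancel hS hS')
        (fun x z y y' hR _ hR' _ => comp_right_cancel hR hR')
        (fun δ z => transfer_left hZ hN (toListP s t Z p).length p le_rfl z δ)
    · exact sumByRel_comp_congr k (fun δ y => (y, δ) ∈ N)
        (fun y z => comp s t Z p y = some z)
        (fun δ y => comp s t Z y p = some δ) (fun y z => (z, y) ∈ N)
        (fun x z y y' _ hS _ hS' => comp_right_cancel hS hS')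
        (fun x z y y' hR _ hR' _ => comp_left_cancel hR hR')
        (fun δ z => transfer_right hZ hN (toListP s t Z p).length p le_rfl z δ)
end

section
/- Let A = kQ/<Z> be the monomial algebra on the crown quiver: Q_0 = ℤ/5, arrows a_i : i → i+1 for i ∈ ℤ/5, with relations Z = {a_4a_3a_2, a_3a_2a_1}. Then the degree-one Hochschild homology HH_1(A) vanishes (char k = 0). -/
namespace Monomial

open Finsupp Classical




variable {V A : Type*} {k : Type*} [Field k]

/-- The basis vector of `k(Q₁ ⊙ B)` given by an arrow of a cycle `l` together
with its complement: for the cycle `l = [a₁, …, aₙ]` and index `j`,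
this is the pair `(a_{j+1}, a_{j+1}^{co})`, where `a_{j+1}^{co}` is the
complementary path of the arrow `a_{j+1}` in the cycle; by convention it is `0`
when the complement is not in `B`. -/
noncomputable def bAt (s t : A → V) (Z : Set (List A)) (k : Type*) [Field k]
    (l : List A) (j : ℕ) : (A × List A) →₀ k :=
  match (l.rotate (j + 1)).getLast? with
  | none => 0
  | Option.some a =>
      if InB s t Z ((l.rotate (j + 1)).dropLast) then
        Finsupp.single (a, (l.rotate (j + 1)).dropLast) 1
      else 0

/-- The canonical element `K_C = Σᵢ (aᵢ, aᵢ^{co})` attached to a cycle `γ`. -/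
noncomputable def KElt (s t : A → V) (Z : Set (List A)) (k : Type*) [Field k]
    (γ : List A) : (A × List A) →₀ k :=
  ∑ j ∈ Finset.range γ.length, bAt s t Z k γ j

/-- Value of the differential `d₀` on a basis element `(a, β)`:
`d₀(a,β) = (t a, aβ) − (s a, βa)`, where summands whose second component is a
zero path are interpreted as `0` (the vertex component is determined by the
cycle, so is omitted). -/
noncomputable def d0b (s t : A → V) (Z : Set (List A)) (k : Type*) [Field k]
    (p : A × List A) : List A →₀ k :=
  (if InB s t Z (p.2 ++ [p.1]) then Finsupp.single (p.2 ++ [p.1]) (1 : k) else 0)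
    - (if InB s t Z (p.1 :: p.2) then Finsupp.single (p.1 :: p.2) (1 : k) else 0)

/-- The differential `d₀ : k(Q₁ ⊙ B) → k(Q₀ ⊙ B)`. -/
noncomputable def d0map (s t : A → V) (Z : Set (List A)) {k : Type*} [Field k]
    (f : (A × List A) →₀ k) : List A →₀ k :=
  f.sum fun p c => c • d0b s t Z k p

/-- Value of the differential `d₁` on a basis element `(α, β) ∈ Z ⊙ B`:
for `α = aₙ … a₁` this is `Σᵢ (aᵢ, a_{i-1} … a₁ β aₙ … a_{i+1})`,
with summands whose second component is a zero path interpreted as `0`. -/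
noncomputable def d1b (s t : A → V) (Z : Set (List A)) (k : Type*) [Field k]
    (α β : List A) : (A × List A) →₀ k :=
  ∑ j ∈ Finset.range α.length, bAt s t Z k (β ++ α) (β.length + j)

/-- The differential `d₁ : k(Z ⊙ B) → k(Q₁ ⊙ B)`. -/
noncomputable def d1map (s t : A → V) (Z : Set (List A)) {k : Type*} [Field k]
    (g : (List A × List A) →₀ k) : (A × List A) →₀ k :=
  g.sum fun q c => c • d1b s t Z k q.1 q.2

/-- `(α, β)` is a cyclic pair in `Z ⊙ B`. -/
def ZPairOK (s t : A → V) (Z : Set (List A)) (q : List A × List A) : Prop :=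
  q.1 ∈ Z ∧ InB s t Z q.2 ∧ IsCycleList s t (q.2 ++ q.1)

end Monomial


namespace Monomial

variable {V' A' : Type*} {k' : Type*} [Field k']

lemma d0map_add (s t : A' → V') (Z : Set (List A')) (f g : (A' × List A') →₀ k') :
    d0map s t Z (f + g) = d0map s t Z f + d0map s t Z g :=
  Finsupp.sum_add_index' (fun p => zero_smul k' (d0b s t Z k' p))
    (fun p c1 c2 => add_smul c1 c2 (d0b s t Z k' p))

lemma d0map_single (s t : A' → V') (Z : Set (List A')) (p : A' × List A') (c : k') :
    d0map s t Z (Finsupp.single p c) = c • d0b s t Z k' p :=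
  Finsupp.sum_single_index (zero_smul k' _)

lemma d1map_single (s t : A' → V') (Z : Set (List A')) (α β : List A') (c : k') :
    d1map s t Z (Finsupp.single (α, β) c) = c • d1b s t Z k' α β :=
  Finsupp.sum_single_index (zero_smul k' _)

abbrev Tf : ZMod 5 → ZMod 5 := fun i => i + 1
abbrev Zc : Set (List (ZMod 5)) := {[1, 2, 3], [2, 3, 4]}

lemma isPath_getElem {l : List (ZMod 5)} (h : IsPath id Tf l) :
    ∀ (i : ℕ) (hi : i < l.length), l[i] = l[0]'(by omega) + (i : ZMod 5) := by
  intro i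
  induction i with
  | zero => intro hi; simp
  | succ n ih =>
    intro hi
    have h2 := List.isChain_iff_getElem.mp h n (by omega)
    have := ih (by omega)
    push_cast
    simp only [Tf, id_eq] at h2
    rw [← h2, this]; ring

lemma inB_of (l : List (ZMod 5)) (h1 : List.Chain' (fun a b : ZMod 5 => a + 1 = b) l)
    (h2 : ¬ ([1,2,3] : List (ZMod 5)) <:+: l)
    (h3 : ¬ ([2,3,4] : List (ZMod 5)) <:+: l) : InB id Tf Zc l := by
  refine ⟨h1, ?_⟩
  intro z hz
  rcases (by simpa [Zc] using hz : z = [1,2,3] ∨ z = [2,3,4]) with rfl | rfl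
  · exact h2
  · exact h3

lemma inB_length_le {l : List (ZMod 5)} (h : InB id Tf Zc l) : l.length ≤ 6 := by
  by_contra hlen
  push_neg at hlen
  obtain ⟨v, hv⟩ : ∃ v, l[0]'(by omega) = v := ⟨_, rfl⟩
  set i : ℕ := (1 - v).val with hi
  have hi5 : i < 5 := ZMod.val_lt _
  have hvi : v + (i : ZMod 5) = 1 := by
    rw [hi, ZMod.natCast_rightInverse _]; ring
  have hkey : (l.drop i).take 3 = [1,2,3] := by
    apply List.ext_getElem
    · simp; omega
    · intro j h1 h2
      have h3 : j < 3 := by simpa using h2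
      simp only [List.getElem_take, List.getElem_drop]
      simp only [List.length_take, List.length_drop, lt_min_iff] at h1
      rw [isPath_getElem h.1 (i+j) (by omega), hv]
      push_cast
      interval_cases j <;> simp <;> linear_combination hvi
  have : ([1,2,3] : List (ZMod 5)) <:+: l := by
    rw [← hkey]
    exact ((List.take_prefix _ _).isInfix).trans (List.drop_suffix _ _).isInfix
  exact h.2 [1,2,3] (by simp) this

lemma pairOK_cases {p : ZMod 5 × List (ZMod 5)} (h : PairOK id Tf Zc p) :
    p = ((2 : ZMod 5), ([3,4,0,1] : List (ZMod 5))) ∨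
      p = ((3 : ZMod 5), ([4,0,1,2] : List (ZMod 5))) := by
  obtain ⟨a, β⟩ := p
  obtain ⟨hB, hne, hpath, hcyc⟩ := h
  dsimp only at hB hne hpath hcyc ⊢
  have hln : (β ++ [a]).length = β.length + 1 := by simp
  have hlt : β.length + 1 ≤ 7 := by have := inB_length_le hB; omega
  have hcyc' : Tf ((β ++ [a]).getLast hne) = (β ++ [a]).head hne := by
    have h1 := hcyc
    rw [tgtOf, srcOf, List.getLast?_eq_getLast hne, List.head?_eq_head hne] at h1
    simpa using h1
  rw [List.getLast_eq_getElem, List.head_eq_getElem] at hcyc'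
  rw [isPath_getElem hpath _ (by omega)] at hcyc'
  have hdvd : (5 : ℕ) ∣ β.length + 1 := by
    rw [← ZMod.natCast_eq_zero_iff]
    push_cast
    simp only [hln, Nat.add_sub_cancel, Tf] at hcyc'
    linear_combination hcyc'
  have hlen4 : β.length = 4 := by omega
  have hβ0 : 0 < β.length := by omega
  obtain ⟨v, hv⟩ : ∃ v, β[0]'(by omega) = v := ⟨_, rfl⟩
  have hβ : β = [v, v+1, v+2, v+3] := by
    apply List.ext_getElem
    · simp [hlen4]
    · intro j h1 h2
      rw [isPath_getElem hB.1 j (by omega), hv]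
      simp only [hlen4] at h1
      interval_cases j <;> simp
  have ha : a = v + 4 := by
    have h4 := isPath_getElem hpath 4 (by omega)
    rw [List.getElem_append_right (by omega), List.getElem_append_left (by omega), hv] at h4
    simp only [hlen4] at h4
    simpa using h4
  subst hβ ha
  have h5 : v = 0 ∨ v = 1 ∨ v = 2 ∨ v = 3 ∨ v = 4 := by generalize v = w; revert w; decide
  rcases h5 with rfl | rfl | rfl | rfl | rfl
  · exact absurd (hB.2 [1,2,3] (by simp)) (by simp; decide)
  · exact absurd (hB.2 [1,2,3] (by simp)) (by simp; decide)
  · exact absurd (hB.2 [2,3,4] (by simp [Zc])) (by simp; decide)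
  · left; simp only [Prod.mk.injEq]; exact ⟨by decide, by decide⟩
  · right; simp only [Prod.mk.injEq]; exact ⟨by decide, by decide⟩

end Monomial

open Monomial in
/-- for the monomial algebra on the crown quiver with vertices
`ℤ/5`, arrows `aᵢ : i → i+1` (the arrow `aᵢ` is encoded by its source `i`, so
`s = id`, `t = (·+1)`), and relations `Z = {a₄a₃a₂, a₃a₂a₁}` (the lists
`[2,3,4]` and `[1,2,3]` in traversal order), the first Hochschild homology
`HH₁(A)` vanishes in characteristic zero: every element of `k(Q₁ ⊙ B)` killed
by `d₀` lies in the image under `d₁` of `k(Z ⊙ B)`. -/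
theorem HH1_crown5_vanishes {k : Type*} [Field k] [CharZero k]
    (s t : ZMod 5 → ZMod 5) (hs : s = id) (ht : t = fun i => i + 1)
    (Z : Set (List (ZMod 5))) (hZ : Z = {[1, 2, 3], [2, 3, 4]}) :
    ∀ f : (ZMod 5 × List (ZMod 5)) →₀ k,
      (∀ p ∈ f.support, PairOK s t Z p) →
      d0map s t Z f = 0 →
      ∃ g : (List (ZMod 5) × List (ZMod 5)) →₀ k,
        (∀ q ∈ g.support, ZPairOK s t Z q) ∧ d1map s t Z g = f := by
  subst hs ht hZ
  intro f hsupp hd0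
  classical
  -- notation
  set p1 : ZMod 5 × List (ZMod 5) := (2, [3,4,0,1]) with hp1
  set p2 : ZMod 5 × List (ZMod 5) := (3, [4,0,1,2]) with hp2
  -- basic InB facts
  have hBc : InB id Tf Zc ([3,4,0,1,2] : List (ZMod 5)) :=
    inB_of _ (by simp [List.Chain', List.isChain_cons_cons]; decide) (by decide) (by decide)
  have hB3401 : InB id Tf Zc ([3,4,0,1] : List (ZMod 5)) :=
    inB_of _ (by simp [List.Chain', List.isChain_cons_cons]; decide) (by decide) (by decide)
  have hB4012 : InB id Tf Zc ([4,0,1,2] : List (ZMod 5)) :=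
    inB_of _ (by simp [List.Chain', List.isChain_cons_cons]; decide) (by decide) (by decide)
  have hB40 : InB id Tf Zc ([4,0] : List (ZMod 5)) :=
    inB_of _ (by simp [List.Chain', List.isChain_cons_cons]; decide) (by decide) (by decide)
  have hN1 : ¬ InB id Tf Zc ([2,3,4,0,1] : List (ZMod 5)) := fun h =>
    h.2 [2,3,4] (by simp [Zc]) (by decide)
  have hN2 : ¬ InB id Tf Zc ([4,0,1,2,3] : List (ZMod 5)) := fun h =>
    h.2 [1,2,3] (by simp) (by decide)
  have hN3 : ¬ InB id Tf Zc ([2,3,4,0] : List (ZMod 5)) := fun h =>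
    h.2 [2,3,4] (by simp [Zc]) (by decide)
  -- value of d0b on the two possible pairs
  have hd0b1 : d0b id Tf Zc k p1 = Finsupp.single ([3,4,0,1,2] : List (ZMod 5)) 1 := by
    show (if InB id Tf Zc ([3,4,0,1,2] : List (ZMod 5)) then
        Finsupp.single ([3,4,0,1,2] : List (ZMod 5)) (1:k) else 0)
      - (if InB id Tf Zc ([2,3,4,0,1] : List (ZMod 5)) then
        Finsupp.single ([2,3,4,0,1] : List (ZMod 5)) (1:k) else 0) = _
    rw [if_pos hBc, if_neg hN1, sub_zero]
  have hd0b2 : d0b id Tf Zc k p2 = -Finsupp.single ([3,4,0,1,2] : List (ZMod 5)) 1 := by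
    show (if InB id Tf Zc ([4,0,1,2,3] : List (ZMod 5)) then
        Finsupp.single ([4,0,1,2,3] : List (ZMod 5)) (1:k) else 0)
      - (if InB id Tf Zc ([3,4,0,1,2] : List (ZMod 5)) then
        Finsupp.single ([3,4,0,1,2] : List (ZMod 5)) (1:k) else 0) = _
    rw [if_neg hN2, if_pos hBc, zero_sub]
  -- f is supported on p1, p2
  have hne12 : p1 ≠ p2 := by rw [hp1, hp2]; decide
  have hf0 : f = Finsupp.single p1 (f p1) + Finsupp.single p2 (f p2) := by
    ext q
    rcases eq_or_ne q p1 with rfl | h1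
    · rw [Finsupp.add_apply, Finsupp.single_eq_same,
        Finsupp.single_eq_of_ne' (Ne.symm hne12), add_zero]
    · rcases eq_or_ne q p2 with rfl | h2
      · rw [Finsupp.add_apply, Finsupp.single_eq_of_ne' hne12, Finsupp.single_eq_same, zero_add]
      · rw [Finsupp.add_apply, Finsupp.single_eq_of_ne' (Ne.symm h1),
          Finsupp.single_eq_of_ne' (Ne.symm h2), add_zero]
        by_contra hq0
        have hq : q ∈ f.support := Finsupp.mem_support_iff.mpr hq0
        rcases pairOK_cases (hsupp q hq) with rfl | rfl
        · exact h1 rfl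
        · exact h2 rfl
  -- compute d0map f and deduce f p1 = f p2
  have hdm : d0map id Tf Zc f
      = (f p1 - f p2) • Finsupp.single ([3,4,0,1,2] : List (ZMod 5)) (1:k) := by
    conv_lhs => rw [hf0]
    rw [d0map_add, d0map_single, d0map_single, hd0b1, hd0b2, sub_smul]
    module
  have hceq : f p1 = f p2 := by
    have hval := DFunLike.congr_fun hd0 ([3,4,0,1,2] : List (ZMod 5))
    rw [hdm] at hval
    simp only [Finsupp.smul_apply, Finsupp.single_eq_same, smul_eq_mul, mul_one,
      Finsupp.coe_zero, Pi.zero_apply] at hval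
    exact sub_eq_zero.mp hval
  -- the preimage
  refine ⟨Finsupp.single ([1,2,3], [4,0]) (f p1), ?_, ?_⟩
  · intro q hq
    have hq' : q = (([1,2,3] : List (ZMod 5)), ([4,0] : List (ZMod 5))) := by
      have := Finsupp.support_single_subset hq
      simpa using this
    subst hq'
    refine ⟨by simp, hB40, by simp, ?_, by decide⟩
    · show IsPath id Tf [4,0,1,2,3]
      simp [IsPath, List.Chain', List.isChain_cons_cons]; decide
  · -- compute d1map
    have e2 : bAt id Tf Zc k (([4,0] : List (ZMod 5)) ++ [1,2,3]) (2 + 0) =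
        if InB id Tf Zc ([2,3,4,0] : List (ZMod 5)) then
          Finsupp.single ((1:ZMod 5), ([2,3,4,0] : List (ZMod 5))) (1:k) else 0 := rfl
    have e3 : bAt id Tf Zc k (([4,0] : List (ZMod 5)) ++ [1,2,3]) (2 + 1) =
        if InB id Tf Zc ([3,4,0,1] : List (ZMod 5)) then
          Finsupp.single ((2:ZMod 5), ([3,4,0,1] : List (ZMod 5))) (1:k) else 0 := rfl
    have e4 : bAt id Tf Zc k (([4,0] : List (ZMod 5)) ++ [1,2,3]) (2 + 2) =
        if InB id Tf Zc ([4,0,1,2] : List (ZMod 5)) then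
          Finsupp.single ((3:ZMod 5), ([4,0,1,2] : List (ZMod 5))) (1:k) else 0 := rfl
    have hd1b : d1b id Tf Zc k [1,2,3] [4,0]
        = Finsupp.single p1 (1:k) + Finsupp.single p2 1 := by
      unfold d1b
      rw [show (([1,2,3] : List (ZMod 5))).length = 3 from rfl,
        show (([4,0] : List (ZMod 5))).length = 2 from rfl,
        Finset.sum_range_succ, Finset.sum_range_succ, Finset.sum_range_one,
        e2, e3, e4, if_neg hN3, if_pos hB3401, if_pos hB4012, zero_add]
    rw [← hceq] at hf0
    rw [d1map_single, hd1b, smul_add, Finsupp.smul_single', Finsupp.smul_single',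
      mul_one]
    exact hf0.symm
end
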